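/- Fix an integer p ≥ 1, a probability space (Ω, F, P), square-integrable random variables ε₁, …, ε_p with E[ε_k] = 0 for all k, and a real p×p matrix A. Define X_i = Σ_{k=1}^p A_{ik}·ε_k. Suppose j is an index with A_{jk} = 0 for all k ≠ j and A_{jj} = 1 (so X_j = ε_j), with E[ε_j²] > 0, and suppose that for every k ≠ j the conditional expectation of ε_k given the σ-algebra generated by ε_j is 0 almost surely. Then for every i ≠ j: E[X_i·X_j] = A_{ij}·E[X_j²], and the residual R_{i|j} = X_i − (E[X_i·X_j]/E[X_j²])·X_j satisfies E[R_{i|j} | σ(X_j)] = 0 almost surely. -/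

import Mathlib

open MeasureTheory

/-- Residual source-detection lemma of LiMIAM: in the linear model `X = A·ε`, if `j` is
a source node (row `j` of `A` is the `j`-th standard basis vector), `E[ε_j²] > 0`, and
every other disturbance is mean independent of `ε_j` (i.e. `E[ε_k | σ(ε_j)] = 0` a.s.),
then for every `i ≠ j` we have `E[X_i·X_j] = A_{ij}·E[X_j²]` and the population
least-squares residual `R_{i|j}` satisfies `E[R_{i|j} | σ(X_j)] = 0` a.s. -/
theorem stmt_11 {Ω : Type*} [MeasurableSpace Ω] (μ : Measure Ω)
    [IsProbabilityMeasure μ] (p : ℕ) (hp : 1 ≤ p)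
    (ε : Fin p → Ω → ℝ) (hmeas : ∀ k, Measurable (ε k))
    (hL2 : ∀ k, MemLp (ε k) 2 μ)
    (hmean : ∀ k, ∫ ω, ε k ω ∂μ = 0)
    (A : Matrix (Fin p) (Fin p) ℝ)
    (X : Fin p → Ω → ℝ) (hX : ∀ i, X i = fun ω => ∑ k, A i k * ε k ω)
    (j : Fin p) (hAjj : A j j = 1) (hAj : ∀ k, k ≠ j → A j k = 0)
    (hvar : 0 < ∫ ω, ε j ω ^ 2 ∂μ)
    (hmi : ∀ k, k ≠ j →
      μ[ε k | MeasurableSpace.comap (ε j) (borel ℝ)] =ᵐ[μ] 0) :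
    ∀ i : Fin p, i ≠ j →
      (∫ ω, X i ω * X j ω ∂μ = A i j * ∫ ω, X j ω ^ 2 ∂μ) ∧
      μ[fun ω => X i ω -
          ((∫ ω', X i ω' * X j ω' ∂μ) / ∫ ω', X j ω' ^ 2 ∂μ) * X j ω
        | MeasurableSpace.comap (X j) (borel ℝ)] =ᵐ[μ] 0 := by
  intro i hij
  have hXj : X j = ε j := by
    funext ω
    simp only [hX j]
    rw [Finset.sum_eq_single j (fun k _ hk => by rw [hAj k hk, zero_mul])
      (fun h => absurd (Finset.mem_univ j) h)]
    rw [hAjj, one_mul]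
  set m : MeasurableSpace Ω := MeasurableSpace.comap (ε j) (borel ℝ) with hm
  -- products ε k * ε j are integrable (Hölder / L2)
  have hmul : ∀ k, Integrable (fun ω => ε k ω * ε j ω) μ := by
    intro k
    have := ((hL2 j).smul (hL2 k) (r := 1)).integrable le_rfl
    simpa [Pi.smul_apply, smul_eq_mul, mul_comm, Pi.mul_def] using this
  -- ε j is m-measurable
  have hεjm : Measurable[m] (ε j) := fun s hs => ⟨s, hs, rfl⟩
  have hmle := (hmeas j).comap_le
  rw [BorelSpace.measurable_eq (α := ℝ), ← hm] at hmle
  haveI : SigmaFinite (μ.trim hmle) := inferInstance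
  have hεjm' : StronglyMeasurable[m] (ε j) := hεjm.stronglyMeasurable
  -- key: cross moments vanish
  have hcross : ∀ k, k ≠ j → ∫ ω, ε k ω * ε j ω ∂μ = 0 := by
    intro k hk
    have h1 : μ[fun ω => ε j ω * ε k ω | m] =ᵐ[μ] fun ω => ε j ω * (μ[ε k | m]) ω := by
      exact condExp_mul_of_stronglyMeasurable_left hεjm' (by rw [mul_comm]; exact hmul k)
        ((hL2 k).integrable one_le_two)
    have h2 : μ[fun ω => ε j ω * ε k ω | m] =ᵐ[μ] 0 := by
      filter_upwards [h1, hmi k hk] with ω h1 h2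
      simp [h1, h2]
    calc ∫ ω, ε k ω * ε j ω ∂μ = ∫ ω, ε j ω * ε k ω ∂μ := by
          simp_rw [mul_comm]
      _ = ∫ ω, (μ[fun ω => ε j ω * ε k ω | m]) ω ∂μ :=
          (integral_condExp hmle).symm
      _ = 0 := by rw [integral_congr_ae h2]; simp
  have hXj2 : ∫ ω, X j ω ^ 2 ∂μ = ∫ ω, ε j ω ^ 2 ∂μ := by rw [hXj]
  -- part 1
  have hpart1 : ∫ ω, X i ω * X j ω ∂μ = A i j * ∫ ω, X j ω ^ 2 ∂μ := by
    rw [hXj2, hX i, hXj]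
    have : ∫ ω, (∑ k, A i k * ε k ω) * ε j ω ∂μ
        = ∑ k, A i k * ∫ ω, ε k ω * ε j ω ∂μ := by
      simp_rw [Finset.sum_mul, mul_assoc]
      rw [integral_finset_sum]
      · exact Finset.sum_congr rfl fun k _ => integral_const_mul _ _
      · exact fun k _ => (hmul k).const_mul _
    rw [this, Finset.sum_eq_single j
      (fun k _ hk => by rw [hcross k hk, mul_zero])
      (fun h => absurd (Finset.mem_univ j) h)]
    congr 1
    exact integral_congr_ae (Filter.Eventually.of_forall fun ω => (sq (ε j ω)).symm)
  refine ⟨hpart1, ?_⟩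
  -- the residual equals ∑ k ≠ j, A i k * ε k
  have hne : ∫ ω, X j ω ^ 2 ∂μ ≠ 0 := by rw [hXj2]; exact ne_of_gt hvar
  have hcoef : (∫ ω', X i ω' * X j ω' ∂μ) / ∫ ω', X j ω' ^ 2 ∂μ = A i j := by
    rw [hpart1, mul_div_assoc, div_self hne, mul_one]
  have hres : (fun ω => X i ω -
      ((∫ ω', X i ω' * X j ω' ∂μ) / ∫ ω', X j ω' ^ 2 ∂μ) * X j ω)
      = ∑ k ∈ Finset.univ.erase j, (A i k • ε k) := by
    funext ω
    rw [hcoef, hX i, hXj]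
    simp only [Finset.sum_apply, Pi.smul_apply, smul_eq_mul]
    rw [← Finset.sum_erase_add _ _ (Finset.mem_univ j)]
    ring
  rw [hres, hXj]
  have hint : ∀ k ∈ Finset.univ.erase j, Integrable (A i k • ε k) μ :=
    fun k _ => ((hL2 k).integrable one_le_two).smul _
  refine (condExp_finset_sum hint m).trans ?_
  have : ∀ k ∈ Finset.univ.erase j, μ[A i k • ε k | m] =ᵐ[μ] 0 := by
    intro k hk
    refine (condExp_smul (A i k) (ε k) m).trans ?_
    filter_upwards [hmi k (Finset.ne_of_mem_erase hk)] with ω hω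
    simp [hω]
  refine (eventuallyEq_sum this).trans ?_
  simp
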